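/- Consider gradient descent with momentum on the quadratic model f(x) = (1/2) xᵀ H x, i.e. the iteration m_{t+1} = β m_t + H x_t, x_{t+1} = x_t − η m_{t+1}, with step size η > 0, momentum parameter β ∈ [0,1), initialization m_0 = 0 and arbitrary x_0 ∈ ℝ^d. Then the critical step size sup{ η > 0 : for every x_0 ∈ ℝ^d, sup_{t≥0} ‖x_t‖ < ∞ } equals 2(1+β) / λ_max(H). -/

import Mathlib

open Matrix

/-! ### Auxiliary scalar lemmas -/

lemma geomSumBound {q : ℝ} (h0 : 0 ≤ q) (h1 : q < 1) (n : ℕ) :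
    ∑ i ∈ Finset.range n, q ^ i ≤ 1 / (1 - q) := by
  induction n with
  | zero => simpa using div_nonneg zero_le_one (by linarith : (0:ℝ) ≤ 1 - q)
  | succ n ih =>
      rw [geom_sum_succ]
      have h : q * ∑ i ∈ Finset.range n, q ^ i ≤ q * (1 / (1 - q)) :=
        mul_le_mul_of_nonneg_left ih h0
      have hne : (1:ℝ) - q ≠ 0 := by linarith
      have h2 : q * (1 / (1 - q)) + 1 = 1 / (1 - q) := by
        field_simp
        ring
      linarith

lemma quadRoots (a b : ℝ) : ∃ r s : ℂ, r + s = (a : ℂ) ∧ r * s = (b : ℂ) := by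
  obtain ⟨e, he⟩ := IsAlgClosed.exists_pow_nat_eq ((a : ℂ) ^ 2 - 4 * b) zero_lt_two
  exact ⟨((a : ℂ) + e) / 2, ((a : ℂ) - e) / 2, by ring, by
    have : (((a : ℂ) + e) / 2) * (((a : ℂ) - e) / 2) = ((a : ℂ) ^ 2 - e ^ 2) / 4 := by ring
    rw [this, he]; ring⟩

lemma rootsLeOne {a b : ℝ} (hb0 : 0 ≤ b) (hb1 : b < 1) (ha : |a| ≤ 1 + b)
    {r s : ℂ} (hsum : r + s = (a : ℂ)) (hmul : r * s = (b : ℂ))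
    (hrs : ‖s‖ ≤ ‖r‖) :
    ‖r‖ ≤ 1 ∧ ‖s‖ ^ 2 ≤ b := by
  have habs : ‖r‖ * ‖s‖ = b := by
    rw [← norm_mul, hmul, Complex.norm_real, Real.norm_eq_abs, abs_of_nonneg hb0]
  have hs2 : ‖s‖ ^ 2 ≤ b := by nlinarith [norm_nonneg s]
  refine ⟨?_, hs2⟩
  by_cases him : r.im = 0
  · set x := r.re with hx
    set y := s.re with hy
    have hsim : s.im = 0 := by
      have := congrArg Complex.im hsum
      simp [him] at this; linarith [this]
    have hxy1 : x + y = a := by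
      have := congrArg Complex.re hsum; simpa using this
    have hxy2 : x * y = b := by
      have := congrArg Complex.re hmul
      simp [Complex.mul_re, him, hsim] at this; simpa using this
    have hr : ‖r‖ = |x| := by
      rw [Complex.norm_def, Complex.normSq_apply, him]
      simp [Real.sqrt_mul_self_eq_abs]
      rfl
    have hs : ‖s‖ = |y| := by
      rw [Complex.norm_def, Complex.normSq_apply, hsim]
      simp [Real.sqrt_mul_self_eq_abs]
      rfl
    rw [hr]
    rw [hr, hs] at hrs
    have ha1 : a ≤ 1 + b := (abs_le.mp ha).2
    have ha2 : -(1 + b) ≤ a := (abs_le.mp ha).1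
    by_contra hcon
    push_neg at hcon
    have hx2 : 1 < x ^ 2 := by nlinarith [abs_nonneg x, sq_abs x]
    have hfact : (1 - x ^ 2) * (1 - y ^ 2) = (1 + b) ^ 2 - a ^ 2 := by nlinarith []
    have hy2 : 1 ≤ y ^ 2 := by nlinarith [sq_abs x, sq_abs y]
    nlinarith [sq_abs x, sq_abs y, abs_nonneg y]
  · have hsim : s.im = -r.im := by
      have := congrArg Complex.im hsum; simp at this; linarith
    have hre : s.re = r.re := by
      have h0 := congrArg Complex.im hmul
      simp [Complex.mul_im, hsim] at h0
      have h1 : r.im * (s.re - r.re) = 0 := by linarith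
      rcases mul_eq_zero.mp h1 with h | h
      · exact (him h).elim
      · linarith
    have hconj : s = starRingEnd ℂ r := by
      apply Complex.ext <;> simp [hre, hsim]
    have habs2 : ‖r‖ ^ 2 = b := by
      rw [hconj] at habs; rw [← habs]; simp [sq]
    nlinarith [norm_nonneg r]

lemma boundedAux {a b : ℝ} {r s : ℂ} (hsum : r + s = (a : ℂ)) (hmul : r * s = (b : ℂ))
    (hr1 : ‖r‖ ≤ 1) (hq : ‖s‖ < 1)
    (u : ℕ → ℝ) (hu : ∀ t, u (t + 2) = a * u (t + 1) - b * u t) :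
    ∃ C : ℝ, ∀ t, |u t| ≤ C := by
  set U : ℕ → ℂ := fun t => ((u t : ℂ)) with hU
  set w : ℕ → ℂ := fun t => U (t + 1) - r * U t with hw
  have hwrec : ∀ t, w (t + 1) = s * w t := by
    intro t
    show U (t + 2) - r * U (t + 1) = s * (U (t + 1) - r * U t)
    have h2 : U (t + 2) = (a : ℂ) * U (t + 1) - (b : ℂ) * U t := by
      simp only [hU, hu t]; push_cast; ring
    rw [h2]
    linear_combination (U t) * hmul - (U (t + 1)) * hsum
  have hwpow : ∀ t, w t = s ^ t * w 0 := by
    intro t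
    induction t with
    | zero => simp
    | succ t ih => rw [hwrec t, ih]; ring
  set q := ‖s‖ with hqdef
  have hq0 : 0 ≤ q := norm_nonneg s
  have key : ∀ t, ‖U t‖ ≤
      ‖U 0‖ + ‖w 0‖ * ∑ k ∈ Finset.range t, q ^ k := by
    intro t
    induction t with
    | zero => simp
    | succ t ih =>
        have hUt : U (t + 1) = r * U t + w t := by simp only [hw]; ring
        rw [hUt]
        calc ‖r * U t + w t‖
            ≤ ‖r * U t‖ + ‖w t‖ := norm_add_le _ _
          _ = ‖r‖ * ‖U t‖ + ‖w t‖ := by rw [norm_mul]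
          _ ≤ 1 * ‖U t‖ + q ^ t * ‖w 0‖ := by
              have hwt : ‖w t‖ = q ^ t * ‖w 0‖ := by
                rw [hwpow t, norm_mul, norm_pow]
              have h3 := mul_le_mul_of_nonneg_right hr1 (norm_nonneg (U t))
              rw [hwt]; linarith
          _ ≤ (‖U 0‖ + ‖w 0‖ * ∑ k ∈ Finset.range t, q ^ k)
                + q ^ t * ‖w 0‖ := by
              rw [one_mul]; linarith
          _ = ‖U 0‖ + ‖w 0‖ * ∑ k ∈ Finset.range (t + 1), q ^ k := by
              rw [Finset.sum_range_succ]; ring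
  refine ⟨‖U 0‖ + ‖w 0‖ * (1 / (1 - q)), fun t => ?_⟩
  have h1 : |u t| = ‖U t‖ := by simp [hU]
  rw [h1]
  calc ‖U t‖ ≤ ‖U 0‖ + ‖w 0‖ * ∑ k ∈ Finset.range t, q ^ k :=
        key t
    _ ≤ ‖U 0‖ + ‖w 0‖ * (1 / (1 - q)) := by
        have := mul_le_mul_of_nonneg_left (geomSumBound hq0 hq t) (norm_nonneg (w 0))
        linarith

/-- Solutions of a stable second-order linear recurrence are bounded. -/
lemma boundedOfRecur {a b : ℝ} (hb0 : 0 ≤ b) (hb1 : b < 1) (ha : |a| ≤ 1 + b)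
    (u : ℕ → ℝ) (hu : ∀ t, u (t + 2) = a * u (t + 1) - b * u t) :
    ∃ C : ℝ, ∀ t, |u t| ≤ C := by
  obtain ⟨r, s, hsum, hmul⟩ := quadRoots a b
  have hb' : Real.sqrt b < 1 := by
    rw [show (1:ℝ) = Real.sqrt 1 by simp]
    exact Real.sqrt_lt_sqrt hb0 hb1
  rcases le_total (‖s‖) (‖r‖) with hrs | hrs
  · obtain ⟨hr1, hs2⟩ := rootsLeOne hb0 hb1 ha hsum hmul hrs
    have hq : ‖s‖ < 1 := by
      have : ‖s‖ ≤ Real.sqrt b := by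
        rw [← Real.sqrt_sq (norm_nonneg s)]
        exact Real.sqrt_le_sqrt hs2
      linarith
    exact boundedAux hsum hmul hr1 hq u hu
  · obtain ⟨hr1, hs2⟩ := rootsLeOne hb0 hb1 ha (by rw [← hsum]; ring) (by rw [← hmul]; ring) hrs
    have hq : ‖r‖ < 1 := by
      have : ‖r‖ ≤ Real.sqrt b := by
        rw [← Real.sqrt_sq (norm_nonneg r)]
        exact Real.sqrt_le_sqrt hs2
      linarith
    exact boundedAux (by rw [← hsum]; ring) (by rw [← hmul]; ring) hr1 hq u hu

/-- Solutions of an unstable second-order linear recurrence (with the GDM initial data)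
are unbounded. -/
lemma unboundedOfRecur {a b : ℝ} (hb0 : 0 ≤ b) (hb1 : b < 1) (ha : a < -(1 + b))
    (u : ℕ → ℝ) (hu : ∀ t, u (t + 2) = a * u (t + 1) - b * u t)
    (h0 : u 0 = 1) (h1 : u 1 = a - b) :
    ¬ ∃ C : ℝ, ∀ t, |u t| ≤ C := by
  have hdisc : 0 ≤ a ^ 2 - 4 * b := by nlinarith
  set D := Real.sqrt (a ^ 2 - 4 * b) with hD
  have hD2 : D ^ 2 = a ^ 2 - 4 * b := Real.sq_sqrt hdisc
  have hD0 : 0 ≤ D := Real.sqrt_nonneg _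
  set r := (a - D) / 2 with hrdef
  set s := (a + D) / 2 with hsdef
  have hsum : r + s = a := by rw [hrdef, hsdef]; ring
  have hmul : r * s = b := by
    rw [hrdef, hsdef]
    have : (a - D) / 2 * ((a + D) / 2) = (a ^ 2 - D ^ 2) / 4 := by ring
    rw [this, hD2]; ring
  have hr : r < -1 := by
    have hD1 : a + 2 < D := by nlinarith
    rw [hrdef]; linarith
  have hs0 : s ≤ 0 := by nlinarith
  have hs1 : -1 < s := by nlinarith
  set w : ℕ → ℝ := fun t => u (t + 1) - s * u t with hw
  have hwrec : ∀ t, w (t + 1) = r * w t := by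
    intro t
    show u (t + 2) - s * u (t + 1) = r * (u (t + 1) - s * u t)
    rw [hu t]
    linear_combination (u (t + 1)) * hsum - (u t) * hmul - (u t) / 2 * hD2
  have hwpow : ∀ t, w t = r ^ t * w 0 := by
    intro t
    induction t with
    | zero => simp
    | succ t ih => rw [hwrec t, ih]; ring
  have hw0 : w 0 = r * (1 - s) := by
    show u 1 - s * u 0 = r * (1 - s)
    rw [h0, h1]
    linear_combination hsum - hmul - hD2 / 2
  have hw0neg : w 0 < 0 := by
    rw [hw0]
    have : 0 < 1 - s := by linarith
    nlinarith
  rintro ⟨C, hC⟩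
  have hC0 : 1 ≤ C := by have := hC 0; rw [h0] at this; simpa using this
  have hwbd : ∀ t, |w t| ≤ 2 * C := by
    intro t
    have h1 := hC (t + 1)
    have h2 := hC t
    have : |w t| ≤ |u (t + 1)| + |s| * |u t| := by
      calc |w t| = |u (t + 1) - s * u t| := rfl
        _ ≤ |u (t + 1)| + |s * u t| := abs_sub _ _
        _ = |u (t + 1)| + |s| * |u t| := by rw [abs_mul]
    have hsabs : |s| ≤ 1 := abs_le.mpr ⟨by linarith, by linarith⟩
    have : |s| * |u t| ≤ 1 * C :=
      mul_le_mul hsabs h2 (abs_nonneg _) zero_le_one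
    linarith
  have hrabs : 1 < |r| := by rw [abs_of_neg (by linarith : r < 0)]; linarith
  obtain ⟨t, ht⟩ := ((tendsto_pow_atTop_atTop_of_one_lt hrabs).eventually_gt_atTop
    (2 * C / |w 0|)).exists
  have hw0abs : 0 < |w 0| := abs_pos.mpr (ne_of_lt hw0neg)
  have : 2 * C < |w t| := by
    rw [hwpow t, abs_mul, abs_pow]
    rw [div_lt_iff₀ hw0abs] at ht
    linarith
  linarith [hwbd t]

/-! ### Euclidean space helpers -/

section helpers

variable {d : ℕ}

lemma dot_eq_inner (v : EuclideanSpace ℝ (Fin d)) (x : Fin d → ℝ) :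
    (⇑v : Fin d → ℝ) ⬝ᵥ x = @inner ℝ _ _ v ((WithLp.equiv 2 (Fin d → ℝ)).symm x) := by
  simp [dotProduct, PiLp.inner_apply, RCLike.inner_apply]
  exact Finset.sum_congr rfl fun i _ => mul_comm _ _

lemma pi_norm_le_euclidean (x : Fin d → ℝ) :
    ‖x‖ ≤ ‖(WithLp.equiv 2 (Fin d → ℝ)).symm x‖ := by
  rw [pi_norm_le_iff_of_nonneg (norm_nonneg _)]
  intro j
  rw [EuclideanSpace.norm_eq]
  have h1 : ‖x j‖ = Real.sqrt (‖x j‖ ^ 2) := (Real.sqrt_sq (norm_nonneg _)).symm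
  rw [h1]
  apply Real.sqrt_le_sqrt
  have := Finset.single_le_sum (f := fun i => ‖x i‖ ^ 2)
    (fun i _ => sq_nonneg _) (Finset.mem_univ j)
  simpa using this

lemma euclidean_le_pi_norm (x : Fin d → ℝ) :
    ‖(WithLp.equiv 2 (Fin d → ℝ)).symm x‖ ≤ Real.sqrt d * ‖x‖ := by
  rw [EuclideanSpace.norm_eq]
  have h1 : ∑ i, ‖((WithLp.equiv 2 (Fin d → ℝ)).symm x) i‖ ^ 2 ≤ (d : ℝ) * ‖x‖ ^ 2 := by
    calc ∑ i, ‖((WithLp.equiv 2 (Fin d → ℝ)).symm x) i‖ ^ 2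
        ≤ ∑ _i : Fin d, ‖x‖ ^ 2 := by
          apply Finset.sum_le_sum
          intro i _
          have : ‖((WithLp.equiv 2 (Fin d → ℝ)).symm x) i‖ = ‖x i‖ := by
            simp
          rw [this]
          exact pow_le_pow_left₀ (norm_nonneg _) (norm_le_pi_norm x i) 2
      _ = (d : ℝ) * ‖x‖ ^ 2 := by simp [mul_comm]
  calc Real.sqrt (∑ i, ‖((WithLp.equiv 2 (Fin d → ℝ)).symm x) i‖ ^ 2)
      ≤ Real.sqrt ((d : ℝ) * ‖x‖ ^ 2) := Real.sqrt_le_sqrt h1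
    _ = Real.sqrt d * ‖x‖ := by
        rw [Real.sqrt_mul (Nat.cast_nonneg d), Real.sqrt_sq (norm_nonneg _)]

lemma parseval (b : OrthonormalBasis (Fin d) ℝ (EuclideanSpace ℝ (Fin d)))
    (Y : EuclideanSpace ℝ (Fin d)) :
    ‖Y‖ = Real.sqrt (∑ i, (@inner ℝ _ _ (b i) Y) ^ 2) := by
  rw [← b.repr.norm_map Y, EuclideanSpace.norm_eq]
  congr 1
  apply Finset.sum_congr rfl
  intro i _
  rw [b.repr_apply_apply, Real.norm_eq_abs, sq_abs]

end helpers

/-- The GDM iterates on the quadratic model `f(x) = ½ xᵀHx`: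
`gdmIter H η β x₀ t = (x_t, m_t)` where `m_{t+1} = β m_t + H x_t`,
`x_{t+1} = x_t − η m_{t+1}`, with `x_0 = x₀` and `m_0 = 0`. -/
noncomputable def gdmIter {d : ℕ} (H : Matrix (Fin d) (Fin d) ℝ) (η β : ℝ)
    (x₀ : Fin d → ℝ) : ℕ → (Fin d → ℝ) × (Fin d → ℝ)
  | 0 => (x₀, 0)
  | t + 1 =>
      let p := gdmIter H η β x₀ t
      let m' := β • p.2 + H *ᵥ p.1
      (p.1 - η • m', m')

/-- The coordinates of the GDM iterates along an eigenvector satisfy a second-order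
linear recurrence. -/
lemma gdm_coord_recur {d : ℕ} (H : Matrix (Fin d) (Fin d) ℝ) (hsymm : Hᵀ = H) (η β : ℝ)
    (x₀ : Fin d → ℝ) (v : Fin d → ℝ) (lam : ℝ) (hv : H *ᵥ v = lam • v) :
    (∀ t, v ⬝ᵥ (gdmIter H η β x₀ (t + 2)).1
        = (1 + β - η * lam) * (v ⬝ᵥ (gdmIter H η β x₀ (t + 1)).1)
          - β * (v ⬝ᵥ (gdmIter H η β x₀ t).1)) ∧
      v ⬝ᵥ (gdmIter H η β x₀ 1).1 = (1 - η * lam) * (v ⬝ᵥ x₀) := by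
  set u : ℕ → ℝ := fun t => v ⬝ᵥ (gdmIter H η β x₀ t).1 with hu
  set μ : ℕ → ℝ := fun t => v ⬝ᵥ (gdmIter H η β x₀ t).2 with hμ
  have key : ∀ x : Fin d → ℝ, v ⬝ᵥ (H *ᵥ x) = lam * (v ⬝ᵥ x) := by
    intro x
    rw [dotProduct_mulVec, ← mulVec_transpose, hsymm, hv, smul_dotProduct, smul_eq_mul]
  have hm : ∀ t, (gdmIter H η β x₀ (t + 1)).2
      = β • (gdmIter H η β x₀ t).2 + H *ᵥ (gdmIter H η β x₀ t).1 := fun t => rfl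
  have hx : ∀ t, (gdmIter H η β x₀ (t + 1)).1
      = (gdmIter H η β x₀ t).1 - η • (gdmIter H η β x₀ (t + 1)).2 := fun t => rfl
  have hμrec : ∀ t, μ (t + 1) = β * μ t + lam * u t := by
    intro t
    show v ⬝ᵥ (gdmIter H η β x₀ (t + 1)).2 = _
    rw [hm t, dotProduct_add, dotProduct_smul, key, smul_eq_mul]
  have hurec : ∀ t, u (t + 1) = u t - η * μ (t + 1) := by
    intro t
    show v ⬝ᵥ (gdmIter H η β x₀ (t + 1)).1 = _
    rw [hx t, dotProduct_sub, dotProduct_smul, smul_eq_mul]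
  constructor
  · intro t
    have h1 := hurec (t + 1)
    have h2 := hμrec (t + 1)
    have h3 := hurec t
    show u (t + 2) = (1 + β - η * lam) * u (t + 1) - β * u t
    linear_combination h1 - η * h2 - β * h3
  · have h1 := hurec 0
    have h2 := hμrec 0
    have h0 : μ 0 = 0 := by show v ⬝ᵥ (0 : Fin d → ℝ) = 0; simp
    show u 1 = (1 - η * lam) * u 0
    rw [h1, h2, h0]
    ring

/-- **Stability of GDM.**  For gradient descent with momentum `β ∈ [0,1)` on the quadratic
model, the critical step size `sup { η > 0 | ∀ x₀, sup_t ‖x_t‖ < ∞ }` equals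
`2(1+β) / λ_max(H)`. -/
theorem gdm_critical_step_size {d : ℕ} (H : Matrix (Fin d) (Fin d) ℝ)
    (hH : H.PosSemidef) (hH0 : H ≠ 0) (β : ℝ) (hβ : β ∈ Set.Ico (0 : ℝ) 1) :
    sSup {η : ℝ | 0 < η ∧ ∀ x₀ : Fin d → ℝ, ∃ C : ℝ, ∀ t : ℕ, ‖(gdmIter H η β x₀ t).1‖ ≤ C}
      = 2 * (1 + β) / (⨆ i, hH.isHermitian.eigenvalues i) := by
  obtain ⟨hβ0, hβ1⟩ := hβ
  have hsymm : Hᵀ = H := by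
    have := hH.isHermitian
    rwa [Matrix.IsHermitian, conjTranspose_eq_transpose_of_trivial] at this
  set b := hH.isHermitian.eigenvectorBasis with hbdef
  set lam := hH.isHermitian.eigenvalues with hlamdef
  have hd : 0 < d := by
    rcases Nat.eq_zero_or_pos d with h | h
    · exfalso; apply hH0; subst h; exact Subsingleton.elim H 0
    · exact h
  haveI : Nonempty (Fin d) := ⟨⟨0, hd⟩⟩
  have hnn : ∀ i, 0 ≤ lam i := fun i => hH.eigenvalues_nonneg i
  obtain ⟨i0, hi0⟩ := Finite.exists_max lam
  set L := ⨆ i, lam i with hLdef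
  have hLe : L = lam i0 :=
    le_antisymm (ciSup_le hi0) (le_ciSup (Set.Finite.bddAbove (Set.finite_range _)) i0)
  have hlamle : ∀ i, lam i ≤ L := fun i => hLe ▸ hi0 i
  have hLpos : 0 < L := by
    rcases lt_or_ge 0 L with h | h
    · exact h
    · exfalso
      apply hH0
      have heig : ∀ i, lam i = 0 := fun i => le_antisymm ((hlamle i).trans h) (hnn i)
      have h0 : (RCLike.ofReal ∘ lam : Fin d → ℝ) = 0 := funext fun i => by
        simp [heig i]
      have := hH.isHermitian.spectral_theorem
      rw [← hlamdef, h0] at this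
      have hdz : Matrix.diagonal (0 : Fin d → ℝ) = 0 := by
        ext i j; simp [Matrix.diagonal_apply]
      rw [this, hdz, map_zero]
  set ηc := 2 * (1 + β) / L with hηc
  have hηcpos : 0 < ηc := div_pos (by linarith) hLpos
  have hηcL : ηc * L = 2 * (1 + β) := div_mul_cancel₀ _ (ne_of_gt hLpos)
  set S := {η : ℝ | 0 < η ∧ ∀ x₀ : Fin d → ℝ, ∃ C : ℝ, ∀ t : ℕ,
      ‖(gdmIter H η β x₀ t).1‖ ≤ C} with hS
  -- the eigenvector equations
  have heigvec : ∀ i, H *ᵥ ⇑(b i) = lam i • ⇑(b i) := fun i =>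
    hH.isHermitian.mulVec_eigenvectorBasis i
  -- membership of the critical step size
  have hmem : ηc ∈ S := by
    refine ⟨hηcpos, fun x₀ => ?_⟩
    have hbound : ∀ i : Fin d, ∃ C : ℝ, ∀ t, |⇑(b i) ⬝ᵥ (gdmIter H ηc β x₀ t).1| ≤ C := by
      intro i
      obtain ⟨hrec, -⟩ := gdm_coord_recur H hsymm ηc β x₀ (⇑(b i)) (lam i) (heigvec i)
      have ha : |1 + β - ηc * lam i| ≤ 1 + β := by
        have h1 : 0 ≤ ηc * lam i := mul_nonneg (le_of_lt hηcpos) (hnn i)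
        have h2 : ηc * lam i ≤ 2 * (1 + β) := by
          calc ηc * lam i ≤ ηc * L := mul_le_mul_of_nonneg_left (hlamle i) (le_of_lt hηcpos)
            _ = 2 * (1 + β) := hηcL
        rw [abs_le]; constructor <;> linarith
      exact boundedOfRecur hβ0 hβ1 ha _ hrec
    choose C hC using hbound
    refine ⟨Real.sqrt (∑ i, C i ^ 2), fun t => ?_⟩
    calc ‖(gdmIter H ηc β x₀ t).1‖
        ≤ ‖(WithLp.equiv 2 (Fin d → ℝ)).symm (gdmIter H ηc β x₀ t).1‖ :=
          pi_norm_le_euclidean _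
      _ = Real.sqrt (∑ i, (@inner ℝ _ _ (b i)
            ((WithLp.equiv 2 (Fin d → ℝ)).symm (gdmIter H ηc β x₀ t).1)) ^ 2) :=
          parseval b _
      _ ≤ Real.sqrt (∑ i, C i ^ 2) := by
          apply Real.sqrt_le_sqrt
          apply Finset.sum_le_sum
          intro i _
          rw [← dot_eq_inner]
          have h1 := hC i t
          calc (⇑(b i) ⬝ᵥ (gdmIter H ηc β x₀ t).1) ^ 2
              = |⇑(b i) ⬝ᵥ (gdmIter H ηc β x₀ t).1| ^ 2 := (sq_abs _).symm
            _ ≤ C i ^ 2 := by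
                apply pow_le_pow_left₀ (abs_nonneg _) h1
  -- upper bound for members of S
  have hub : ∀ η ∈ S, η ≤ ηc := by
    intro η hη
    by_contra hcon
    push_neg at hcon
    obtain ⟨hηpos, hηbd⟩ := hη
    -- take x₀ as the top eigenvector
    obtain ⟨hrec, hone⟩ := gdm_coord_recur H hsymm η β (⇑(b i0)) (⇑(b i0)) (lam i0) (heigvec i0)
    set u : ℕ → ℝ := fun t => ⇑(b i0) ⬝ᵥ (gdmIter H η β (⇑(b i0)) t).1 with hudef
    have hY : (WithLp.equiv 2 (Fin d → ℝ)).symm (⇑(b i0)) = b i0 := rfl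
    have hu0 : u 0 = 1 := by
      show ⇑(b i0) ⬝ᵥ ⇑(b i0) = 1
      rw [dot_eq_inner, hY]
      have := orthonormal_iff_ite.mp b.orthonormal i0 i0
      simpa using this
    have haL : 2 * (1 + β) < η * lam i0 := by
      have := mul_lt_mul_of_pos_right hcon hLpos
      rw [hηcL] at this
      rwa [hLe] at this
    have ha : 1 + β - η * lam i0 < -(1 + β) := by linarith
    have hu1 : u 1 = (1 + β - η * lam i0) - β := by
      have h1 : u 1 = (1 - η * lam i0) * u 0 := hone
      rw [h1, hu0]; ring
    have hunbd := unboundedOfRecur hβ0 hβ1 ha u hrec hu0 hu1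
    apply hunbd
    obtain ⟨C, hC⟩ := hηbd (⇑(b i0))
    refine ⟨Real.sqrt d * C, fun t => ?_⟩
    have hCS : |u t| ≤ ‖(WithLp.equiv 2 (Fin d → ℝ)).symm (gdmIter H η β (⇑(b i0)) t).1‖ := by
      have h1 : u t = @inner ℝ _ _ (b i0)
          ((WithLp.equiv 2 (Fin d → ℝ)).symm (gdmIter H η β (⇑(b i0)) t).1) :=
        dot_eq_inner _ _
      rw [h1]
      calc |@inner ℝ _ _ (b i0) ((WithLp.equiv 2 (Fin d → ℝ)).symm (gdmIter H η β (⇑(b i0)) t).1)|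
          ≤ ‖b i0‖ * ‖(WithLp.equiv 2 (Fin d → ℝ)).symm (gdmIter H η β (⇑(b i0)) t).1‖ :=
            abs_real_inner_le_norm _ _
        _ = ‖(WithLp.equiv 2 (Fin d → ℝ)).symm (gdmIter H η β (⇑(b i0)) t).1‖ := by
            rw [b.orthonormal.1 i0, one_mul]
    calc |u t| ≤ ‖(WithLp.equiv 2 (Fin d → ℝ)).symm (gdmIter H η β (⇑(b i0)) t).1‖ := hCS
      _ ≤ Real.sqrt d * ‖(gdmIter H η β (⇑(b i0)) t).1‖ := euclidean_le_pi_norm _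
      _ ≤ Real.sqrt d * C := by
          apply mul_le_mul_of_nonneg_left (hC t) (Real.sqrt_nonneg _)
  -- conclude
  apply le_antisymm
  · exact csSup_le ⟨ηc, hmem⟩ hub
  · exact le_csSup ⟨ηc, hub⟩ hmem
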